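/- Let A, B be accretive n×n complex matrices and ν a probability measure on [0,1]. Then, in the Loewner order, ℜ(∫₀¹ (A !_t B) dν(t)) ≥ ∫₀¹ ( ((ℜA) !_t (ℜB))^{-1} − 2·min{t,1−t}·( ((ℜA) ! (ℜB))^{-1} − (ℜ(A ! B))^{-1} ) )^{-1} dν(t) ≥ ∫₀¹ (ℜA) !_t (ℜB) dν(t), where the integrals are (entrywise/Bochner) integrals of the continuous matrix-valued integrands. -/

import Mathlib

open Matrix ComplexOrder MeasureTheory

/-- The real part `ℜA = (A + A^*)/2` of a square complex matrix. -/
noncomputable def reMat {n : ℕ} (A : Matrix (Fin n) (Fin n) ℂ) : Matrix (Fin n) (Fin n) ℂ :=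
  (1 / 2 : ℝ) • (A + Aᴴ)

/-- The weighted harmonic mean `A !_t B = ((1-t)A⁻¹ + tB⁻¹)⁻¹`. -/
noncomputable def harmMean {n : ℕ} (A B : Matrix (Fin n) (Fin n) ℂ) (t : ℝ) :
    Matrix (Fin n) (Fin n) ℂ :=
  ((1 - t) • A⁻¹ + t • B⁻¹)⁻¹

/-- Entrywise integral over `[0,1]` of a matrix-valued function, with respect to `ν`. -/
noncomputable def mInt {n : ℕ} (ν : Measure ℝ) (f : ℝ → Matrix (Fin n) (Fin n) ℂ) :
    Matrix (Fin n) (Fin n) ℂ :=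
  Matrix.of fun i j => ∫ t in Set.Icc (0 : ℝ) 1, f t i j ∂ν

set_option maxHeartbeats 1000000
set_option linter.unusedSectionVars false

namespace Stmt10Aux

/-! ### General matrix lemmas -/

section General

variable {m : Type*} [Fintype m] [DecidableEq m]

local notation "Mat" => Matrix m m ℂ

lemma conjT_rsmul (r : ℝ) (M : Mat) : (r • M)ᴴ = r • Mᴴ := by
  ext i j
  simp [Matrix.conjTranspose_apply, Matrix.smul_apply, star_smul]

lemma psd_rsmul {M : Mat} (hM : M.PosSemidef) {r : ℝ} (hr : 0 ≤ r) : (r • M).PosSemidef := by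
  refine posSemidef_iff_dotProduct_mulVec.mpr ⟨by rw [Matrix.IsHermitian, conjT_rsmul, hM.1], fun x => ?_⟩
  rw [smul_mulVec, dotProduct_smul, Complex.real_smul]
  exact mul_nonneg (Complex.zero_le_real.mpr hr) (hM.dotProduct_mulVec_nonneg x)

lemma pd_rsmul {M : Mat} (hM : M.PosDef) {r : ℝ} (hr : 0 < r) : (r • M).PosDef := by
  refine posDef_iff_dotProduct_mulVec.mpr ⟨by rw [Matrix.IsHermitian, conjT_rsmul, hM.1], fun ⦃x⦄ hx => ?_⟩
  rw [smul_mulVec, dotProduct_smul, Complex.real_smul]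
  exact mul_pos (by exact_mod_cast hr) (hM.dotProduct_mulVec_pos hx)

lemma conv_pd {P Q : Mat} (hP : P.PosDef) (hQ : Q.PosDef) {a b : ℝ}
    (ha : 0 ≤ a) (hb : 0 ≤ b) (hab : a + b = 1) : (a • P + b • Q).PosDef := by
  rcases eq_or_lt_of_le ha with h | h
  · have hb1 : b = 1 := by linarith
    rw [← h, hb1, zero_smul, zero_add, one_smul]
    exact hQ
  · exact (pd_rsmul hP h).add_posSemidef (psd_rsmul hQ.posSemidef hb)

lemma isUnit_conjT {M : Mat} (h : IsUnit M) : IsUnit Mᴴ := by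
  rw [Matrix.isUnit_iff_isUnit_det, Matrix.det_conjTranspose]
  exact ((Matrix.isUnit_iff_isUnit_det M).mp h).star

lemma isUnit_inv {M : Mat} (h : IsUnit M) : IsUnit M⁻¹ := by
  rw [Matrix.isUnit_iff_isUnit_det, Matrix.det_nonsing_inv]
  exact isUnit_ringInverse.mpr ((Matrix.isUnit_iff_isUnit_det M).mp h)

lemma pd_conjT_mul_mul {P B : Mat} (hP : P.PosDef) (hB : IsUnit B) : (Bᴴ * P * B).PosDef := by
  refine posDef_iff_dotProduct_mulVec.mpr ⟨Matrix.isHermitian_conjTranspose_mul_mul B hP.1, fun ⦃x⦄ hx => ?_⟩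
  haveI := Matrix.invertibleOfIsUnitDet B ((Matrix.isUnit_iff_isUnit_det B).mp hB)
  have hx' : B *ᵥ x ≠ 0 := by
    intro h0
    exact hx (Matrix.mulVec_injective_of_invertible B (by simpa using h0))
  simpa only [star_mulVec, dotProduct_mulVec, vecMul_vecMul] using hP.dotProduct_mulVec_pos hx'

lemma psd_fromBlocks_corner {P : Mat} (hP : P.PosSemidef) :
    (fromBlocks P (0 : Mat) (0 : Mat) (0 : Mat)).PosSemidef := by
  refine posSemidef_iff_dotProduct_mulVec.mpr ⟨isHermitian_fromBlocks_iff.mpr ⟨hP.1, by simp, by simp, isHermitian_zero⟩, fun x => ?_⟩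
  rw [← Sum.elim_comp_inl_inr x]
  simp only [fromBlocks_mulVec, Matrix.zero_mulVec, add_zero, zero_add,
    Function.star_sumElim]
  simpa using hP.dotProduct_mulVec_nonneg (x ∘ Sum.inl)

lemma schur_min {H : Mat} (X M : Mat) (hH : H.PosDef) :
    (fromBlocks H X Xᴴ M).PosSemidef ↔ (M - Xᴴ * H⁻¹ * X).PosSemidef := by
  haveI := Matrix.invertibleOfIsUnitDet H ((Matrix.isUnit_iff_isUnit_det H).mp hH.isUnit)
  exact Matrix.PosDef.fromBlocks₁₁ X M hH

lemma schur_base {H : Mat} (X : Mat) (hH : H.PosDef) :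
    (fromBlocks H X Xᴴ (Xᴴ * H⁻¹ * X)).PosSemidef :=
  (schur_min X _ hH).mpr (by simpa using (Matrix.PosSemidef.zero : (0 : Mat).PosSemidef))

lemma key_convex {H₀ H₁ X₀ X₁ : Mat} (h₀ : H₀.PosDef) (h₁ : H₁.PosDef) {a b : ℝ}
    (ha : 0 ≤ a) (hb : 0 ≤ b) (hab : a + b = 1) :
    ((a • (X₀ᴴ * H₀⁻¹ * X₀) + b • (X₁ᴴ * H₁⁻¹ * X₁)) -
      (a • X₀ + b • X₁)ᴴ * (a • H₀ + b • H₁)⁻¹ * (a • X₀ + b • X₁)).PosSemidef := by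
  have hHs := conv_pd h₀ h₁ ha hb hab
  apply (schur_min (a • X₀ + b • X₁) _ hHs).mp
  have e : fromBlocks (a • H₀ + b • H₁) (a • X₀ + b • X₁) (a • X₀ + b • X₁)ᴴ
      (a • (X₀ᴴ * H₀⁻¹ * X₀) + b • (X₁ᴴ * H₁⁻¹ * X₁)) =
      a • fromBlocks H₀ X₀ X₀ᴴ (X₀ᴴ * H₀⁻¹ * X₀) + b • fromBlocks H₁ X₁ X₁ᴴ (X₁ᴴ * H₁⁻¹ * X₁) := by
    rw [fromBlocks_smul, fromBlocks_smul, fromBlocks_add, conjTranspose_add, conjT_rsmul,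
      conjT_rsmul]
  rw [e]
  exact (psd_rsmul (schur_base X₀ h₀) ha).add (psd_rsmul (schur_base X₁ h₁) hb)

lemma inv_sub_inv_psd {P Q : Mat} (hP : P.PosDef) (hQ : Q.PosDef) (h : (Q - P).PosSemidef) :
    (P⁻¹ - Q⁻¹).PosSemidef := by
  have h1 : (fromBlocks P (1 : Mat) (1 : Mat)ᴴ P⁻¹).PosSemidef :=
    (schur_min 1 P⁻¹ hP).mpr (by simpa using (Matrix.PosSemidef.zero : (0 : Mat).PosSemidef))
  have h2 : (fromBlocks Q (1 : Mat) (1 : Mat)ᴴ P⁻¹).PosSemidef := by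
    have e : fromBlocks Q (1 : Mat) (1 : Mat)ᴴ P⁻¹ =
        fromBlocks P (1 : Mat) (1 : Mat)ᴴ P⁻¹ + fromBlocks (Q - P) 0 0 0 := by
      rw [fromBlocks_add]
      simp
    rw [e]
    exact h1.add (psd_fromBlocks_corner h)
  have h3 := (schur_min 1 P⁻¹ hQ).mp h2
  simpa using h3

end General

/-! ### Lemmas about `reMat` and `harmMean` -/

section FinN

variable {n : ℕ}

local notation "Mat" => Matrix (Fin n) (Fin n) ℂ

lemma reMat_isHermitian (M : Mat) : (reMat M).IsHermitian := by
  unfold reMat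
  rw [Matrix.IsHermitian, conjT_rsmul, conjTranspose_add, conjTranspose_conjTranspose, add_comm]

lemma reMat_add (X Y : Mat) : reMat (X + Y) = reMat X + reMat Y := by
  unfold reMat
  rw [conjTranspose_add]
  module

lemma reMat_rsmul (r : ℝ) (X : Mat) : reMat (r • X) = r • reMat X := by
  unfold reMat
  rw [conjT_rsmul]
  module

lemma isUnit_of_reMat_posDef {M : Mat} (h : (reMat M).PosDef) : IsUnit M := by
  rw [Matrix.isUnit_iff_isUnit_det, isUnit_iff_ne_zero]
  intro hdet
  obtain ⟨v, hv, hMv⟩ := (Matrix.exists_mulVec_eq_zero_iff).mpr hdet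
  have h2 := h.dotProduct_mulVec_pos hv
  have e1 : star v ⬝ᵥ (Mᴴ *ᵥ v) = 0 := by
    rw [Matrix.dotProduct_mulVec, ← Matrix.star_mulVec, hMv]
    simp
  have e0 : star v ⬝ᵥ (reMat M *ᵥ v) = 0 := by
    unfold reMat
    rw [smul_mulVec, dotProduct_smul, add_mulVec, dotProduct_add, hMv, e1]
    simp
  rw [e0] at h2
  exact lt_irrefl _ h2

set_option maxHeartbeats 1000000 in
lemma reMat_inv {M : Mat} (hM : IsUnit M) : reMat (M⁻¹) = M⁻¹ * reMat M * (M⁻¹)ᴴ := by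
  have hd : IsUnit M.det := (Matrix.isUnit_iff_isUnit_det M).mp hM
  have hdH : IsUnit (Mᴴ).det := by rw [Matrix.det_conjTranspose]; exact hd.star
  unfold reMat
  rw [conjTranspose_nonsing_inv, Matrix.mul_smul, Matrix.smul_mul]
  congr 1
  rw [Matrix.mul_add, Matrix.nonsing_inv_mul M hd, Matrix.add_mul, Matrix.one_mul,
    Matrix.mul_assoc, Matrix.mul_nonsing_inv (Mᴴ) hdH, Matrix.mul_one, add_comm]

lemma reMat_inv_posDef {M : Mat} (h : (reMat M).PosDef) : (reMat M⁻¹).PosDef := by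
  have hU := isUnit_of_reMat_posDef h
  rw [reMat_inv hU]
  nth_rewrite 1 [← conjTranspose_conjTranspose (M⁻¹)]
  exact pd_conjT_mul_mul h (isUnit_conjT (isUnit_inv hU))

/-- `(ℜ(M⁻¹))⁻¹ = Mᴴ (ℜM)⁻¹ M` for accretive `M`. -/
lemma reMat_inv_inv {M : Mat} (h : (reMat M).PosDef) :
    (reMat M⁻¹)⁻¹ = Mᴴ * (reMat M)⁻¹ * M := by
  have hU := isUnit_of_reMat_posDef h
  have hd : IsUnit M.det := (Matrix.isUnit_iff_isUnit_det M).mp hU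
  have hdH : IsUnit (Mᴴ).det := by rw [Matrix.det_conjTranspose]; exact hd.star
  rw [reMat_inv hU, Matrix.mul_inv_rev, Matrix.mul_inv_rev, Matrix.nonsing_inv_nonsing_inv M hd,
    conjTranspose_nonsing_inv, Matrix.nonsing_inv_nonsing_inv (Mᴴ) hdH, ← Matrix.mul_assoc]

/-! ### The function `φ` and its convexity -/

/-- `Z(t) = (1-t)A⁻¹ + tB⁻¹`. -/
noncomputable def Zf (A B : Mat) (t : ℝ) : Mat := (1 - t) • A⁻¹ + t • B⁻¹

lemma harm_eq (A B : Mat) (t : ℝ) : harmMean A B t = (Zf A B t)⁻¹ := rfl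

lemma reMat_Zf (A B : Mat) (t : ℝ) :
    reMat (Zf A B t) = (1 - t) • reMat A⁻¹ + t • reMat B⁻¹ := by
  rw [Zf, reMat_add, reMat_rsmul, reMat_rsmul]

lemma reMat_Zf_posDef {A B : Mat} (hA : (reMat A).PosDef) (hB : (reMat B).PosDef)
    {t : ℝ} (ht : t ∈ Set.Icc (0 : ℝ) 1) : (reMat (Zf A B t)).PosDef := by
  rw [reMat_Zf]
  exact conv_pd (reMat_inv_posDef hA) (reMat_inv_posDef hB) (by linarith [ht.2]) ht.1 (by ring)

lemma reMat_harm_posDef {A B : Mat} (hA : (reMat A).PosDef) (hB : (reMat B).PosDef)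
    {t : ℝ} (ht : t ∈ Set.Icc (0 : ℝ) 1) : (reMat (harmMean A B t)).PosDef := by
  rw [harm_eq]
  exact reMat_inv_posDef (reMat_Zf_posDef hA hB ht)

/-- `φ(t) = (ℜ(A !_t B))⁻¹`. -/
noncomputable def phi (A B : Mat) (t : ℝ) : Mat := (reMat (harmMean A B t))⁻¹

lemma phi_posDef {A B : Mat} (hA : (reMat A).PosDef) (hB : (reMat B).PosDef)
    {t : ℝ} (ht : t ∈ Set.Icc (0 : ℝ) 1) : (phi A B t).PosDef :=
  (reMat_harm_posDef hA hB ht).inv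

lemma phi_eq {A B : Mat} (hA : (reMat A).PosDef) (hB : (reMat B).PosDef)
    {t : ℝ} (ht : t ∈ Set.Icc (0 : ℝ) 1) :
    phi A B t = (Zf A B t)ᴴ * (reMat (Zf A B t))⁻¹ * (Zf A B t) := by
  rw [phi, harm_eq, reMat_inv_inv (reMat_Zf_posDef hA hB ht)]

lemma phi_convex {A B : Mat} (hA : (reMat A).PosDef) (hB : (reMat B).PosDef)
    {a b s : ℝ} (ha : a ∈ Set.Icc (0 : ℝ) 1) (hb : b ∈ Set.Icc (0 : ℝ) 1)
    (hs : s ∈ Set.Icc (0 : ℝ) 1) (c : ℝ) (hc : c = (1 - s) * a + s * b) :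
    ((1 - s) • phi A B a + s • phi A B b - phi A B c).PosSemidef := by
  have hc' : c ∈ Set.Icc (0 : ℝ) 1 := by
    subst hc
    constructor
    · nlinarith [ha.1, hb.1, hs.1, hs.2]
    · nlinarith [ha.2, hb.2, hs.1, hs.2]
  have hZc : Zf A B c = (1 - s) • Zf A B a + s • Zf A B b := by
    unfold Zf
    rw [hc]
    module
  have hRc : reMat (Zf A B c) = (1 - s) • reMat (Zf A B a) + s • reMat (Zf A B b) := by
    rw [hZc, reMat_add, reMat_rsmul, reMat_rsmul]
  rw [phi_eq hA hB ha, phi_eq hA hB hb, phi_eq hA hB hc', hRc, hZc]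
  exact key_convex (reMat_Zf_posDef hA hB ha) (reMat_Zf_posDef hA hB hb)
    (by linarith [hs.2]) hs.1 (by ring)

lemma harm_zero {A : Mat} (B : Mat) (hA : IsUnit A) : harmMean A B 0 = A := by
  rw [harmMean]
  simp only [sub_zero, one_smul, zero_smul, add_zero]
  exact Matrix.nonsing_inv_nonsing_inv A ((Matrix.isUnit_iff_isUnit_det A).mp hA)

lemma harm_one (A : Mat) {B : Mat} (hB : IsUnit B) : harmMean A B 1 = B := by
  rw [harmMean]
  simp only [sub_self, zero_smul, one_smul, zero_add]
  exact Matrix.nonsing_inv_nonsing_inv B ((Matrix.isUnit_iff_isUnit_det B).mp hB)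

lemma phi_zero {A B : Mat} (hA : (reMat A).PosDef) : phi A B 0 = (reMat A)⁻¹ := by
  rw [phi, harm_zero B (isUnit_of_reMat_posDef hA)]

lemma phi_one {A B : Mat} (hB : (reMat B).PosDef) : phi A B 1 = (reMat B)⁻¹ := by
  rw [phi, harm_one A (isUnit_of_reMat_posDef hB)]

/-! ### The pointwise inequality chain -/

/-- `L(t) = (1-t)(ℜA)⁻¹ + t(ℜB)⁻¹`, so that `(ℜA) !_t (ℜB) = L(t)⁻¹`. -/
noncomputable def Lf (A B : Mat) (t : ℝ) : Mat := (1 - t) • (reMat A)⁻¹ + t • (reMat B)⁻¹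

lemma harm_re_eq (A B : Mat) (t : ℝ) : harmMean (reMat A) (reMat B) t = (Lf A B t)⁻¹ := rfl

/-- `Δ = ((ℜA) ! (ℜB))⁻¹ - (ℜ(A ! B))⁻¹`. -/
noncomputable def Df (A B : Mat) : Mat := Lf A B (1/2) - phi A B (1/2)

/-- `M(t) = L(t) - 2 min(t, 1-t) Δ`. -/
noncomputable def Mf (A B : Mat) (t : ℝ) : Mat := Lf A B t - (2 * min t (1 - t)) • Df A B

lemma Lf_posDef {A B : Mat} (hA : (reMat A).PosDef) (hB : (reMat B).PosDef)
    {t : ℝ} (ht : t ∈ Set.Icc (0 : ℝ) 1) : (Lf A B t).PosDef :=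
  conv_pd hA.inv hB.inv (by linarith [ht.2]) ht.1 (by ring)

lemma half_mem : (1/2 : ℝ) ∈ Set.Icc (0 : ℝ) 1 := by norm_num

lemma Df_psd {A B : Mat} (hA : (reMat A).PosDef) (hB : (reMat B).PosDef) :
    (Df A B).PosSemidef := by
  have h := phi_convex hA hB (Set.left_mem_Icc.mpr zero_le_one) (Set.right_mem_Icc.mpr zero_le_one)
    half_mem (1/2) (by norm_num)
  rw [phi_zero hA, phi_one hB] at h
  have e : Df A B = (1 - 1/2 : ℝ) • (reMat A)⁻¹ + (1/2 : ℝ) • (reMat B)⁻¹ - phi A B (1/2) := by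
    rw [Df, Lf]
  rw [e]
  exact h

lemma Mf_sub_phi_psd {A B : Mat} (hA : (reMat A).PosDef) (hB : (reMat B).PosDef)
    {t : ℝ} (ht : t ∈ Set.Icc (0 : ℝ) 1) : (Mf A B t - phi A B t).PosSemidef := by
  rcases le_total t (1/2) with h | h
  · have hmin : min t (1 - t) = t := min_eq_left (by linarith)
    have hconv := phi_convex hA hB (Set.left_mem_Icc.mpr zero_le_one) half_mem
      (⟨by linarith [ht.1], by linarith⟩ : (2*t) ∈ Set.Icc (0:ℝ) 1) t (by ring)
    rw [phi_zero hA] at hconv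
    have eM : Mf A B t - phi A B t =
        (1 - 2*t) • (reMat A)⁻¹ + (2*t) • phi A B (1/2) - phi A B t := by
      rw [Mf, Lf, Df, Lf, hmin]
      module
    rw [eM]
    exact hconv
  · have hmin : min t (1 - t) = 1 - t := min_eq_right (by linarith)
    have hconv := phi_convex hA hB half_mem (Set.right_mem_Icc.mpr zero_le_one)
      (⟨by linarith, by linarith [ht.2]⟩ : (2*t - 1) ∈ Set.Icc (0:ℝ) 1) t (by ring)
    rw [phi_one hB] at hconv
    have eM : Mf A B t - phi A B t =
        (1 - (2*t - 1)) • phi A B (1/2) + (2*t - 1) • (reMat B)⁻¹ - phi A B t := by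
      rw [Mf, Lf, Df, Lf, hmin]
      module
    rw [eM]
    exact hconv

lemma Mf_posDef {A B : Mat} (hA : (reMat A).PosDef) (hB : (reMat B).PosDef)
    {t : ℝ} (ht : t ∈ Set.Icc (0 : ℝ) 1) : (Mf A B t).PosDef := by
  have e : Mf A B t = phi A B t + (Mf A B t - phi A B t) := by abel
  rw [e]
  exact (phi_posDef hA hB ht).add_posSemidef (Mf_sub_phi_psd hA hB ht)

lemma chain1 {A B : Mat} (hA : (reMat A).PosDef) (hB : (reMat B).PosDef)
    {t : ℝ} (ht : t ∈ Set.Icc (0 : ℝ) 1) :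
    (reMat (harmMean A B t) - (Mf A B t)⁻¹).PosSemidef := by
  have h := inv_sub_inv_psd (phi_posDef hA hB ht) (Mf_posDef hA hB ht) (Mf_sub_phi_psd hA hB ht)
  rwa [phi, Matrix.nonsing_inv_nonsing_inv _
    ((Matrix.isUnit_iff_isUnit_det _).mp (reMat_harm_posDef hA hB ht).isUnit)] at h

lemma min_nonneg_of_mem {t : ℝ} (ht : t ∈ Set.Icc (0 : ℝ) 1) : 0 ≤ 2 * min t (1 - t) := by
  have := le_min ht.1 (by linarith [ht.2] : (0:ℝ) ≤ 1 - t)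
  linarith

lemma chain2 {A B : Mat} (hA : (reMat A).PosDef) (hB : (reMat B).PosDef)
    {t : ℝ} (ht : t ∈ Set.Icc (0 : ℝ) 1) :
    ((Mf A B t)⁻¹ - harmMean (reMat A) (reMat B) t).PosSemidef := by
  have hsub : (Lf A B t - Mf A B t).PosSemidef := by
    have e : Lf A B t - Mf A B t = (2 * min t (1 - t)) • Df A B := by
      rw [Mf]
      abel
    rw [e]
    exact psd_rsmul (Df_psd hA hB) (min_nonneg_of_mem ht)
  have h := inv_sub_inv_psd (Mf_posDef hA hB ht) (Lf_posDef hA hB ht) hsub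
  rwa [harm_re_eq]

lemma stmt_integrand_eq {A B : Mat} (hA : (reMat A).PosDef) (hB : (reMat B).PosDef)
    {t : ℝ} (ht : t ∈ Set.Icc (0 : ℝ) 1) :
    ((harmMean (reMat A) (reMat B) t)⁻¹ -
      (2 * min t (1 - t)) • ((harmMean (reMat A) (reMat B) (1/2))⁻¹ -
        (reMat (harmMean A B (1/2)))⁻¹))⁻¹ = (Mf A B t)⁻¹ := by
  have hL : ∀ s ∈ Set.Icc (0 : ℝ) 1, (harmMean (reMat A) (reMat B) s)⁻¹ = Lf A B s := by
    intro s hs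
    rw [harm_re_eq, Matrix.nonsing_inv_nonsing_inv _
      ((Matrix.isUnit_iff_isUnit_det _).mp (Lf_posDef hA hB hs).isUnit)]
  rw [hL t ht, hL (1/2) half_mem]
  rfl

/-! ### Integration lemmas -/

section Integration

local notation "I01" => Set.Icc (0 : ℝ) 1

variable (ν : Measure ℝ)

lemma contOn_inv_entry {W : ℝ → Mat} (hW : Continuous W)
    (hdet : ∀ t ∈ I01, (W t).det ≠ 0) (i j : Fin n) :
    ContinuousOn (fun t => (W t)⁻¹ i j) I01 := by
  have c1 : ContinuousOn (fun t => ((W t).det)⁻¹) I01 := hW.matrix_det.continuousOn.inv₀ hdet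
  have c2 : Continuous fun t => (W t).adjugate i j := hW.matrix_adjugate.matrix_elem i j
  have e : ∀ t, (W t)⁻¹ i j = ((W t).det)⁻¹ * (W t).adjugate i j := by
    intro t
    rw [Matrix.inv_def, Ring.inverse_eq_inv']
    simp [Matrix.smul_apply, smul_eq_mul]
  exact (c1.mul c2.continuousOn).congr fun t _ => e t

lemma mInt_congr {f g : ℝ → Mat} (h : ∀ t ∈ I01, f t = g t) : mInt ν f = mInt ν g := by
  unfold mInt
  ext i j
  simp only [Matrix.of_apply]
  exact setIntegral_congr_fun measurableSet_Icc fun t ht => by rw [h t ht]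

lemma mInt_sub [IsFiniteMeasure ν] {f g : ℝ → Mat}
    (hf : ∀ i j, ContinuousOn (fun t => f t i j) I01)
    (hg : ∀ i j, ContinuousOn (fun t => g t i j) I01) :
    mInt ν f - mInt ν g = mInt ν (fun t => f t - g t) := by
  unfold mInt
  ext i j
  simp only [Matrix.sub_apply, Matrix.of_apply]
  rw [← integral_sub ((hf i j).integrableOn_compact isCompact_Icc)
    ((hg i j).integrableOn_compact isCompact_Icc)]

lemma reMat_mInt [IsFiniteMeasure ν] {f : ℝ → Mat}
    (hf : ∀ i j, ContinuousOn (fun t => f t i j) I01) :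
    reMat (mInt ν f) = mInt ν (fun t => reMat (f t)) := by
  unfold reMat mInt
  ext i j
  simp only [Matrix.smul_apply, Matrix.add_apply, Matrix.conjTranspose_apply, Matrix.of_apply]
  have e1 : (star (∫ t in I01, f t j i ∂ν) : ℂ) = ∫ t in I01, star (f t j i) ∂ν := by
    simpa using (integral_conj (f := fun t => f t j i) (μ := ν.restrict I01)).symm
  rw [e1, ← integral_add ((hf i j).integrableOn_compact isCompact_Icc)
    (((hf j i).star).integrableOn_compact isCompact_Icc), ← integral_smul]

lemma mInt_psd [IsFiniteMeasure ν] {f : ℝ → Mat}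
    (hf : ∀ i j, ContinuousOn (fun t => f t i j) I01)
    (hpsd : ∀ t ∈ I01, (f t).PosSemidef) : (mInt ν f).PosSemidef := by
  have hint : ∀ i j, IntegrableOn (fun t => f t i j) I01 ν :=
    fun i j => (hf i j).integrableOn_compact isCompact_Icc
  rw [posSemidef_iff_dotProduct_mulVec]
  constructor
  · ext i j
    rw [Matrix.conjTranspose_apply]
    show star (mInt ν f j i) = mInt ν f i j
    unfold mInt
    simp only [Matrix.of_apply]
    calc (star (∫ t in I01, f t j i ∂ν) : ℂ)
        = ∫ t in I01, star (f t j i) ∂ν := by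
          simpa using (integral_conj (f := fun t => f t j i) (μ := ν.restrict I01)).symm
      _ = ∫ t in I01, f t i j ∂ν :=
          setIntegral_congr_fun measurableSet_Icc fun t ht => (hpsd t ht).1.apply i j
  · intro x
    have key : star x ⬝ᵥ (mInt ν f *ᵥ x) = ∫ t in I01, star x ⬝ᵥ (f t *ᵥ x) ∂ν := by
      calc star x ⬝ᵥ (mInt ν f *ᵥ x)
          = ∑ i, ∑ j, star (x i) * ((∫ t in I01, f t i j ∂ν) * x j) := by
            simp [dotProduct, Matrix.mulVec, mInt, Finset.mul_sum]
        _ = ∑ i, ∑ j, ∫ t in I01, star (x i) * (f t i j * x j) ∂ν := by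
            refine Finset.sum_congr rfl fun i _ => Finset.sum_congr rfl fun j _ => ?_
            rw [← integral_mul_const, ← integral_const_mul]
        _ = ∫ t in I01, ∑ i, ∑ j, star (x i) * (f t i j * x j) ∂ν := by
            rw [integral_finset_sum _ (fun i _ => integrable_finset_sum _
              (fun j _ => (((hint i j).mul_const (x j)).const_mul (star (x i)))))]
            refine Finset.sum_congr rfl fun i _ => ?_
            rw [integral_finset_sum _ (fun j _ => (((hint i j).mul_const (x j)).const_mul
              (star (x i))))]
        _ = ∫ t in I01, star x ⬝ᵥ (f t *ᵥ x) ∂ν := by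
            refine setIntegral_congr_fun measurableSet_Icc fun t _ => ?_
            simp [dotProduct, Matrix.mulVec, Finset.mul_sum]
    have hq : ∀ t ∈ I01, 0 ≤ star x ⬝ᵥ (f t *ᵥ x) := fun t ht => (hpsd t ht).dotProduct_mulVec_nonneg x
    have e2 : ∫ t in I01, star x ⬝ᵥ (f t *ᵥ x) ∂ν =
        ((∫ t in I01, (star x ⬝ᵥ (f t *ᵥ x)).re ∂ν : ℝ) : ℂ) := by
      rw [show ((∫ t in I01, (star x ⬝ᵥ (f t *ᵥ x)).re ∂ν : ℝ) : ℂ) =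
          ∫ t in I01, ((star x ⬝ᵥ (f t *ᵥ x)).re : ℂ) ∂ν from (integral_ofReal (𝕜 := ℂ)).symm]
      refine setIntegral_congr_fun measurableSet_Icc fun t ht => ?_
      have him : (star x ⬝ᵥ (f t *ᵥ x)).im = 0 := ((Complex.le_def.mp (hq t ht)).2).symm
      apply Complex.ext <;> simp [him]
    rw [key, e2]
    refine Complex.zero_le_real.mpr (setIntegral_nonneg measurableSet_Icc fun t ht => ?_)
    simpa using (Complex.le_def.mp (hq t ht)).1

end Integration

/-! ### Continuity of the specific integrands -/

section Specific

local notation "I01" => Set.Icc (0 : ℝ) 1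

lemma det_ne_of_pd {M : Mat} (h : M.PosDef) : M.det ≠ 0 :=
  ((Matrix.isUnit_iff_isUnit_det M).mp h.isUnit).ne_zero

lemma cont_Zf (A B : Mat) : Continuous (Zf A B) :=
  continuous_matrix fun i j => by
    simp only [Zf, Matrix.add_apply, Matrix.smul_apply]
    exact ((continuous_const.sub continuous_id).smul continuous_const).add
      (continuous_id.smul continuous_const)

lemma cont_Mf (A B : Mat) : Continuous (Mf A B) :=
  continuous_matrix fun i j => by
    simp only [Mf, Lf, Matrix.sub_apply, Matrix.add_apply, Matrix.smul_apply]
    exact (((continuous_const.sub continuous_id).smul continuous_const).add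
      (continuous_id.smul continuous_const)).sub
      ((continuous_const.mul (continuous_id.min (continuous_const.sub continuous_id))).smul
        continuous_const)

lemma cont_Lf (A B : Mat) : Continuous (Lf A B) :=
  continuous_matrix fun i j => by
    simp only [Lf, Matrix.add_apply, Matrix.smul_apply]
    exact ((continuous_const.sub continuous_id).smul continuous_const).add
      (continuous_id.smul continuous_const)

lemma cont_harm {A B : Mat} (hA : (reMat A).PosDef) (hB : (reMat B).PosDef) (i j : Fin n) :
    ContinuousOn (fun t => harmMean A B t i j) I01 :=
  contOn_inv_entry (cont_Zf A B)
    (fun t ht => ((Matrix.isUnit_iff_isUnit_det _).mp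
      (isUnit_of_reMat_posDef (reMat_Zf_posDef hA hB ht))).ne_zero) i j

lemma cont_reharm {A B : Mat} (hA : (reMat A).PosDef) (hB : (reMat B).PosDef) (i j : Fin n) :
    ContinuousOn (fun t => reMat (harmMean A B t) i j) I01 := by
  have e : ∀ t, reMat (harmMean A B t) i j
      = (1/2 : ℝ) • (harmMean A B t i j + star (harmMean A B t j i)) := by
    intro t
    simp [reMat, Matrix.smul_apply, Matrix.add_apply, Matrix.conjTranspose_apply]
  refine ContinuousOn.congr ?_ (fun t _ => e t)
  exact ((cont_harm hA hB i j).add ((cont_harm hA hB j i).star)).const_smul (1/2 : ℝ)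

lemma cont_Minv {A B : Mat} (hA : (reMat A).PosDef) (hB : (reMat B).PosDef) (i j : Fin n) :
    ContinuousOn (fun t => (Mf A B t)⁻¹ i j) I01 :=
  contOn_inv_entry (cont_Mf A B) (fun t ht => det_ne_of_pd (Mf_posDef hA hB ht)) i j

lemma cont_Linv {A B : Mat} (hA : (reMat A).PosDef) (hB : (reMat B).PosDef) (i j : Fin n) :
    ContinuousOn (fun t => harmMean (reMat A) (reMat B) t i j) I01 :=
  contOn_inv_entry (cont_Lf A B) (fun t ht => det_ne_of_pd (Lf_posDef hA hB ht)) i j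

end Specific

end FinN

end Stmt10Aux

open Stmt10Aux in
/-- For accretive `A, B` and a probability measure `ν` on `[0,1]`,
in the Loewner order:
`ℜ(∫₀¹ (A !_t B) dν) ≥ ∫₀¹ (((ℜA) !_t (ℜB))⁻¹ - 2 min{t,1-t} (((ℜA) ! (ℜB))⁻¹ -
(ℜ(A ! B))⁻¹))⁻¹ dν ≥ ∫₀¹ (ℜA) !_t (ℜB) dν`. -/
theorem stmt10 (n : ℕ) (A B : Matrix (Fin n) (Fin n) ℂ)
    (hA : (reMat A).PosDef) (hB : (reMat B).PosDef)
    (ν : Measure ℝ) [IsProbabilityMeasure ν] (hν : ν (Set.Icc (0 : ℝ) 1) = 1) :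
    (reMat (mInt ν (fun t => harmMean A B t)) -
        mInt ν (fun t =>
          ((harmMean (reMat A) (reMat B) t)⁻¹ -
            (2 * min t (1 - t)) • ((harmMean (reMat A) (reMat B) (1 / 2))⁻¹ -
              (reMat (harmMean A B (1 / 2)))⁻¹))⁻¹)).PosSemidef ∧
      (mInt ν (fun t =>
          ((harmMean (reMat A) (reMat B) t)⁻¹ -
            (2 * min t (1 - t)) • ((harmMean (reMat A) (reMat B) (1 / 2))⁻¹ -
              (reMat (harmMean A B (1 / 2)))⁻¹))⁻¹) -
        mInt ν (fun t => harmMean (reMat A) (reMat B) t)).PosSemidef := by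
  have e2 : mInt ν (fun t =>
      ((harmMean (reMat A) (reMat B) t)⁻¹ -
        (2 * min t (1 - t)) • ((harmMean (reMat A) (reMat B) (1 / 2))⁻¹ -
          (reMat (harmMean A B (1 / 2)))⁻¹))⁻¹) = mInt ν (fun t => (Mf A B t)⁻¹) :=
    mInt_congr ν (fun t ht => stmt_integrand_eq hA hB ht)
  constructor
  · rw [e2, reMat_mInt ν (cont_harm hA hB),
      mInt_sub ν (cont_reharm hA hB) (cont_Minv hA hB)]
    exact mInt_psd ν (fun i j => (cont_reharm hA hB i j).sub (cont_Minv hA hB i j))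
      (fun t ht => chain1 hA hB ht)
  · rw [e2, mInt_sub ν (cont_Minv hA hB) (cont_Linv hA hB)]
    exact mInt_psd ν (fun i j => (cont_Minv hA hB i j).sub (cont_Linv hA hB i j))
      (fun t ht => chain2 hA hB ht)
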